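/- Let H be a Krull monoid with free abelian class group of rank r ≥ 2 with basis (e_1,…,e_r), and suppose the set G_P of classes containing prime divisors is finite, symmetric (G_P = −G_P), and contains G_r^+ = {Σ_{i∈I} e_i : ∅ ≠ I ⊆ [1,r]}. Then for each k ∈ ℕ, ρ_{2k}(H) = k·D(G_P) and k·D(G_P) + 1 ≤ ρ_{2k+1}(H) ≤ k·D(G_P) + D(G_P)/2. -/

import Mathlib

/-- A zero-sum sequence over `G₀ ⊆ ℤ^r`: a finite multiset of elements of `G₀` summing to `0`. -/
def IsZeroSumSeq {r : ℕ} (G₀ : Set (Fin r → ℤ)) (S : Multiset (Fin r → ℤ)) : Prop :=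
  (∀ g ∈ S, g ∈ G₀) ∧ S.sum = 0

/-- An atom (minimal zero-sum sequence) over `G₀`: a nonempty zero-sum sequence with no
proper nonempty zero-sum subsequence. -/
def IsAtomSeq {r : ℕ} (G₀ : Set (Fin r → ℤ)) (S : Multiset (Fin r → ℤ)) : Prop :=
  IsZeroSumSeq G₀ S ∧ S ≠ 0 ∧
    ∀ T : Multiset (Fin r → ℤ), T ≤ S → T ≠ 0 → T.sum = 0 → T = S

/-- The signed support `supp⁺(S) = {g : v_g(S) - v_{-g}(S) ≠ 0}`. -/
def signedSupp {r : ℕ} (S : Multiset (Fin r → ℤ)) : Set (Fin r → ℤ) :=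
  {g | S.count g ≠ S.count (-g)}

/-- An elementary zero-sum sequence over `G₀`: one whose signed support is nonempty and
minimal among nonempty signed supports of zero-sum sequences over `G₀`. -/
def IsElemZeroSumSeq {r : ℕ} (G₀ : Set (Fin r → ℤ)) (S : Multiset (Fin r → ℤ)) : Prop :=
  IsZeroSumSeq G₀ S ∧ signedSupp S ≠ ∅ ∧
    ∀ T : Multiset (Fin r → ℤ), IsZeroSumSeq G₀ T → signedSupp T ≠ ∅ →
      signedSupp T ⊆ signedSupp S → signedSupp T = signedSupp S

/-- An elementary atom over `G₀`. -/
def IsElemAtom {r : ℕ} (G₀ : Set (Fin r → ℤ)) (S : Multiset (Fin r → ℤ)) : Prop :=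
  IsAtomSeq G₀ S ∧ IsElemZeroSumSeq G₀ S

/-- The Davenport constant of `G₀`: the supremum (in `ℕ∞`) of the lengths of atoms
(minimal zero-sum sequences) over `G₀`. -/
noncomputable def Davenport {r : ℕ} (G₀ : Set (Fin r → ℤ)) : ℕ∞ :=
  ⨆ U ∈ {U : Multiset (Fin r → ℤ) | IsAtomSeq G₀ U}, (Multiset.card U : ℕ∞)

/-- The elementary Davenport constant of `G₀`: the supremum (in `ℕ∞`) of the lengths of
elementary atoms over `G₀`. -/
noncomputable def DavenportElem {r : ℕ} (G₀ : Set (Fin r → ℤ)) : ℕ∞ :=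
  ⨆ U ∈ {U : Multiset (Fin r → ℤ) | IsElemAtom G₀ U}, (Multiset.card U : ℕ∞)

/-- The set `G_r⁺` of nonzero vertices of the `r`-dimensional hypercube in `ℤ^r`,
i.e. the nonzero 0-1 vectors. -/
def hypercubePlus (r : ℕ) : Set (Fin r → ℤ) :=
  {g | g ≠ 0 ∧ ∀ i, g i = 0 ∨ g i = 1}

/-- An atom of an additive commutative monoid (assumed reduced). -/
def IsAtomM {H : Type*} [AddCommMonoid H] (u : H) : Prop :=
  u ≠ 0 ∧ ∀ a b : H, u = a + b → a = 0 ∨ b = 0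

/-- `n` is a factorization length of `a`: `a` is a sum of `n` atoms. -/
def HasLen {H : Type*} [AddCommMonoid H] (a : H) (n : ℕ) : Prop :=
  ∃ f : Multiset H, (∀ u ∈ f, IsAtomM u) ∧ f.sum = a ∧ Multiset.card f = n

/-- `ρ_k(H) = sup 𝒰_k(H)`, the supremum (in `ℕ∞`) of all lengths occurring in a set of
lengths that contains `k`. -/
noncomputable def rhoInv (H : Type*) [AddCommMonoid H] (k : ℕ) : ℕ∞ :=
  ⨆ n ∈ {n : ℕ | ∃ a : H, HasLen a k ∧ HasLen a n}, (n : ℕ∞)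

namespace St19

variable {r : ℕ} {H : Type*} [AddCancelCommMonoid H] {P : Type*}

/-- selection lemma -/
theorem exists_le_map {α β : Type*} (f : α → β) :
    ∀ (T : Multiset β) (S : Multiset α), T ≤ S.map f → ∃ S', S' ≤ S ∧ S'.map f = T := by
  classical
  intro T
  induction T using Multiset.induction_on with
  | empty => intro S _; exact ⟨0, zero_le, rfl⟩
  | cons g T ih =>
    intro S h
    have hg : g ∈ Multiset.map f S := Multiset.mem_of_le h (Multiset.mem_cons_self g T)
    obtain ⟨p, hp, hfp⟩ := Multiset.mem_map.mp hg
    have hT : T ≤ (S.erase p).map f := by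
      obtain ⟨u, hu⟩ := Multiset.le_iff_exists_add.mp h
      have hS : S.map f = g ::ₘ (T + u) := by rw [hu, Multiset.cons_add]
      have : (S.map f).erase g = T + u := by rw [hS, Multiset.erase_cons_head]
      have hmape : (S.map f).erase g = (S.erase p).map f := by
        conv_lhs => rw [← Multiset.cons_erase hp]
        rw [Multiset.map_cons, hfp, Multiset.erase_cons_head]
      rw [← hmape, this]; exact Multiset.le_add_right _ _
    obtain ⟨S', hS'le, hS'map⟩ := ih (S.erase p) hT
    refine ⟨p ::ₘ S', ?_, ?_⟩
    · calc p ::ₘ S' ≤ p ::ₘ S.erase p := Multiset.cons_le_cons p hS'le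
        _ = S := Multiset.cons_erase hp
    · rw [Multiset.map_cons, hfp, hS'map]

variable (φ : H →+ (P →₀ ℕ)) (cl : P → (Fin r → ℤ))

/-- the block homomorphism -/
noncomputable def blockOf : H →+ Multiset (Fin r → ℤ) :=
  (Multiset.mapAddMonoidHom cl).comp (Finsupp.toMultiset.comp φ)

theorem blockOf_apply (a : H) : blockOf φ cl a = (Finsupp.toMultiset (φ a)).map cl := rfl

theorem phi_inj (hred : ∀ a b : H, a + b = 0 → a = 0)
    (hdiv : ∀ a b : H, φ a ≤ φ b → ∃ c : H, b = a + c) :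
    Function.Injective φ := by
  intro a b hab
  obtain ⟨c, hc⟩ := hdiv a b (le_of_eq hab)
  obtain ⟨d, hd⟩ := hdiv b a (le_of_eq hab.symm)
  have : a + (c + d) = a + 0 := by
    conv_lhs => rw [← add_assoc, ← hc, ← hd]
    rw [add_zero]
  have hcd : c + d = 0 := add_left_cancel this
  have hc0 : c = 0 := hred c d hcd
  rw [hc, hc0, add_zero]

theorem sum_toMultiset_map (x : P →₀ ℕ) :
    ((Finsupp.toMultiset x).map cl).sum = x.sum fun p n => (n : ℤ) • cl p := by
  induction x using Finsupp.induction with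
  | zero => simp
  | single_add p n x _ _ ih =>
    rw [Finsupp.toMultiset_add, Multiset.map_add, Multiset.sum_add, ih,
      Finsupp.toMultiset_single, Finsupp.sum_add_index' (by simp) (by intro a b c; simp [add_smul]),
      Finsupp.sum_single_index (by simp)]
    simp [Multiset.map_nsmul, Multiset.sum_nsmul, natCast_zsmul]


section Ker
variable (hker : ∀ x y : P →₀ ℕ, (∃ a b : H, x + φ a = y + φ b) ↔
      (x.sum fun p n => (n : ℤ) • cl p) = (y.sum fun p n => (n : ℤ) • cl p))
    (hdiv : ∀ a b : H, φ a ≤ φ b → ∃ c : H, b = a + c)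

include hker

theorem sum_zero_of_image (a : H) : ((φ a).sum fun p n => (n : ℤ) • cl p) = 0 := by
  have h := (hker (φ a) 0).mp ⟨0, a, by simp⟩
  simpa using h

include hdiv in
theorem image_of_sum_zero (x : P →₀ ℕ) (hx : (x.sum fun p n => (n : ℤ) • cl p) = 0) :
    ∃ a : H, φ a = x := by
  have h : ∃ a b : H, x + φ a = 0 + φ b := (hker x 0).mpr (by simpa using hx)
  obtain ⟨a, b, hab⟩ := h
  rw [zero_add] at hab
  have hle : φ a ≤ φ b := hab ▸ le_add_self
  obtain ⟨c, hc⟩ := hdiv a b hle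
  refine ⟨c, ?_⟩
  have : φ c + φ a = x + φ a := by
    rw [hab, hc, map_add, add_comm]
  exact add_right_cancel this

theorem block_sum_zero (a : H) : (blockOf φ cl a).sum = 0 := by
  rw [blockOf_apply, sum_toMultiset_map]
  exact sum_zero_of_image φ cl hker a

theorem block_zerosum (a : H) : IsZeroSumSeq (Set.range cl) (blockOf φ cl a) := by
  refine ⟨fun g hg => ?_, block_sum_zero φ cl hker a⟩
  obtain ⟨p, _, rfl⟩ := Multiset.mem_map.mp hg
  exact ⟨p, rfl⟩

end Ker

theorem block_eq_zero_iff (hinj : Function.Injective φ) (a : H) :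
    blockOf φ cl a = 0 ↔ a = 0 := by
  classical
  constructor
  · intro h
    rw [blockOf_apply, Multiset.map_eq_zero] at h
    have : φ a = 0 := by
      ext p
      have := congrArg (Multiset.count p) h
      simpa [Finsupp.count_toMultiset] using this
    have h0 : φ a = φ 0 := by simpa using this
    exact hinj h0
  · rintro rfl; simp [blockOf_apply]

section Split
variable (hker : ∀ x y : P →₀ ℕ, (∃ a b : H, x + φ a = y + φ b) ↔
      (x.sum fun p n => (n : ℤ) • cl p) = (y.sum fun p n => (n : ℤ) • cl p))
    (hdiv : ∀ a b : H, φ a ≤ φ b → ∃ c : H, b = a + c)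
    (hred : ∀ a b : H, a + b = 0 → a = 0)

include hker hdiv hred

/-- key splitting lemma: a zero-sum sub-block lifts to a decomposition in `H`. -/
theorem block_split (a : H) (T : Multiset (Fin r → ℤ)) (hle : T ≤ blockOf φ cl a)
    (hT : T.sum = 0) : ∃ c d : H, a = c + d ∧ blockOf φ cl c = T := by
  classical
  obtain ⟨S', hS'le, hS'map⟩ := exists_le_map cl T (Finsupp.toMultiset (φ a)) hle
  obtain ⟨R, hR⟩ := Multiset.le_iff_exists_add.mp hS'le
  set x : P →₀ ℕ := Multiset.toFinsupp S' with hx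
  set y : P →₀ ℕ := Multiset.toFinsupp R with hy
  have hxy : x + y = φ a := by
    have : Multiset.toFinsupp (S' + R) = Multiset.toFinsupp (Finsupp.toMultiset (φ a)) := by
      rw [← hR]
    rw [map_add, Finsupp.toMultiset_toFinsupp] at this
    exact this
  have hsumx : (x.sum fun p n => (n : ℤ) • cl p) = 0 := by
    rw [← sum_toMultiset_map, hx, Multiset.toFinsupp_toMultiset, hS'map, hT]
  have hsumy : (y.sum fun p n => (n : ℤ) • cl p) = 0 := by
    have htot := sum_zero_of_image φ cl hker a
    rw [← hxy, Finsupp.sum_add_index' (by simp) (by intro a b c; simp [add_smul])] at htot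
    rw [hsumx, zero_add] at htot
    exact htot
  obtain ⟨c, hc⟩ := image_of_sum_zero φ cl hker hdiv x hsumx
  obtain ⟨d, hd⟩ := image_of_sum_zero φ cl hker hdiv y hsumy
  have hinj := phi_inj φ hred hdiv
  refine ⟨c, d, ?_, ?_⟩
  · apply hinj
    rw [map_add, hc, hd, hxy]
  · rw [blockOf_apply, hc, hx, Multiset.toFinsupp_toMultiset, hS'map]

theorem atomM_iff_atomSeq (a : H) :
    IsAtomM a ↔ IsAtomSeq (Set.range cl) (blockOf φ cl a) := by
  have hinj := phi_inj φ hred hdiv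
  constructor
  · rintro ⟨ha0, hmin⟩
    refine ⟨block_zerosum φ cl hker a, ?_, ?_⟩
    · rw [Ne, block_eq_zero_iff φ cl hinj]; exact ha0
    · intro T hle hT0 hTsum
      obtain ⟨c, d, rfl, hbc⟩ := block_split φ cl hker hdiv hred a T hle hTsum
      rcases hmin c d rfl with h | h
      · exact absurd (by rw [← hbc, h, map_zero]) hT0
      · rw [h, add_zero, ← hbc]
  · rintro ⟨hzs, hb0, hmin⟩
    refine ⟨?_, ?_⟩
    · intro h; rw [h] at hb0; simp at hb0
    · intro c d hcd
      by_contra hcon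
      push_neg at hcon
      obtain ⟨hc0, hd0⟩ := hcon
      have hbc0 : blockOf φ cl c ≠ 0 := by rw [Ne, block_eq_zero_iff φ cl hinj]; exact hc0
      have hbd0 : blockOf φ cl d ≠ 0 := by rw [Ne, block_eq_zero_iff φ cl hinj]; exact hd0
      have hble : blockOf φ cl c ≤ blockOf φ cl a := by
        rw [hcd, map_add]; exact Multiset.le_add_right _ _
      have heq := hmin (blockOf φ cl c) hble hbc0 (block_sum_zero φ cl hker c)
      have : blockOf φ cl c + blockOf φ cl d = blockOf φ cl c + 0 := by
        rw [add_zero, ← map_add, ← hcd, heq]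
      exact hbd0 (add_left_cancel this)

end Split

/-! ### pure multiset lemmas -/

theorem zero_notin_atomseq {G₀ : Set (Fin r → ℤ)} {U : Multiset (Fin r → ℤ)}
    (hU : IsAtomSeq G₀ U) (h0 : (0 : Fin r → ℤ) ∈ U) : U = ({0} : Multiset (Fin r → ℤ)) :=
  (hU.2.2 {0} (Multiset.singleton_le.mpr h0) (by simp) (by simp)).symm

theorem atomseq_pair {G₀ : Set (Fin r → ℤ)} {g : Fin r → ℤ} (hg : g ∈ G₀) (hng : -g ∈ G₀)
    (hg0 : g ≠ 0) : IsAtomSeq G₀ ({g, -g} : Multiset (Fin r → ℤ)) := by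
  refine ⟨⟨?_, by simp⟩, by simp, ?_⟩
  · intro h hh
    rcases Multiset.mem_cons.mp hh with h1 | h1
    · rw [h1]; exact hg
    · rw [Multiset.mem_singleton.mp h1]; exact hng
  · intro T hle hT0 hTsum
    have hcard : Multiset.card T ≤ 2 := by
      have := Multiset.card_le_card hle; simpa using this
    have hcard1 : 1 ≤ Multiset.card T := by
      rw [Nat.one_le_iff_ne_zero]; simpa using hT0
    interval_cases h : Multiset.card T
    · obtain ⟨a, rfl⟩ := Multiset.card_eq_one.mp h
      have ha : a = 0 := by simpa using hTsum
      have : a ∈ ({g, -g} : Multiset (Fin r → ℤ)) := Multiset.mem_of_le hle (by simp)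
      rcases Multiset.mem_cons.mp this with h1 | h1
      · exact absurd (ha ▸ h1.symm) hg0
      · rw [Multiset.mem_singleton] at h1
        exfalso
        apply hg0
        have h2 : -g = 0 := h1 ▸ ha
        simpa using congrArg Neg.neg h2
    · exact Multiset.eq_of_le_of_card_le hle (by simp [h])

theorem atomseq_neg {G₀ : Set (Fin r → ℤ)} (hsymm : ∀ g ∈ G₀, -g ∈ G₀)
    {U : Multiset (Fin r → ℤ)} (hU : IsAtomSeq G₀ U) :
    IsAtomSeq G₀ (U.map fun g => -g) := by
  obtain ⟨⟨hmem, hsum⟩, hU0, hmin⟩ := hU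
  have hnegneg : ∀ S : Multiset (Fin r → ℤ), ((S.map fun g => -g).map fun g => -g) = S := by
    intro S; rw [Multiset.map_map]; simp
  refine ⟨⟨?_, ?_⟩, ?_, ?_⟩
  · intro h hh
    obtain ⟨g, hg, rfl⟩ := Multiset.mem_map.mp hh
    exact hsymm g (hmem g hg)
  · rw [Multiset.sum_map_neg']; simp [hsum]
  · simpa using hU0
  · intro T hle hT0 hTsum
    have hle' : (T.map fun g => -g) ≤ U := by
      have := Multiset.map_le_map (f := fun g : Fin r → ℤ => -g) hle
      rwa [hnegneg] at this
    have hT0' : (T.map fun g => -g) ≠ 0 := by simpa using hT0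
    have hTsum' : (T.map fun g => -g).sum = 0 := by rw [Multiset.sum_map_neg']; simp [hTsum]
    have := hmin _ hle' hT0' hTsum'
    have := congrArg (fun S : Multiset (Fin r → ℤ) => S.map fun g => -g) this
    simpa [hnegneg] using this

theorem pairs_sum (U : Multiset (Fin r → ℤ)) :
    (U.map fun g => ({g, -g} : Multiset (Fin r → ℤ))).sum = U + U.map (fun g => -g) := by
  induction U using Multiset.induction_on with
  | empty => simp
  | cons a U ih =>
    rw [Multiset.map_cons, Multiset.sum_cons, ih, Multiset.map_cons]
    rw [Multiset.insert_eq_cons, Multiset.cons_add, Multiset.singleton_add]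
    rw [Multiset.cons_add]
    congr 1
    rw [← Multiset.singleton_add, ← Multiset.singleton_add]
    abel


section Lift
variable [DecidableEq P]
variable (sec : (Fin r → ℤ) → P)

open Classical in
/-- canonical lift of a zero-sum sequence -/
noncomputable def liftA (S : Multiset (Fin r → ℤ)) : H :=
  if h : ∃ a : H, φ a = Multiset.toFinsupp (S.map sec) then h.choose else 0

variable (hsec : ∀ g ∈ Set.range cl, cl (sec g) = g)
    (hker : ∀ x y : P →₀ ℕ, (∃ a b : H, x + φ a = y + φ b) ↔
      (x.sum fun p n => (n : ℤ) • cl p) = (y.sum fun p n => (n : ℤ) • cl p))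
    (hdiv : ∀ a b : H, φ a ≤ φ b → ∃ c : H, b = a + c)

omit [DecidableEq P] in
include hsec in
theorem map_sec_map_cl {S : Multiset (Fin r → ℤ)} (hS : ∀ g ∈ S, g ∈ Set.range cl) :
    (S.map sec).map cl = S := by
  rw [Multiset.map_map]
  calc S.map (cl ∘ sec) = S.map id := Multiset.map_congr rfl (fun g hg => hsec g (hS g hg))
    _ = S := Multiset.map_id S

include hsec hker hdiv in
theorem phi_liftA {S : Multiset (Fin r → ℤ)} (hS : IsZeroSumSeq (Set.range cl) S) :
    φ (liftA φ sec S) = Multiset.toFinsupp (S.map sec) := by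
  have hex : ∃ a : H, φ a = Multiset.toFinsupp (S.map sec) := by
    apply image_of_sum_zero φ cl hker hdiv
    rw [← sum_toMultiset_map, Multiset.toFinsupp_toMultiset, map_sec_map_cl cl sec hsec hS.1,
      hS.2]
  rw [liftA, dif_pos hex]
  exact hex.choose_spec

include hsec hker hdiv in
theorem block_liftA {S : Multiset (Fin r → ℤ)} (hS : IsZeroSumSeq (Set.range cl) S) :
    blockOf φ cl (liftA φ sec S) = S := by
  rw [blockOf_apply, phi_liftA φ cl sec hsec hker hdiv hS, Multiset.toFinsupp_toMultiset,
    map_sec_map_cl cl sec hsec hS.1]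

include hsec hker hdiv in
theorem phi_sum_lift (F : Multiset (Multiset (Fin r → ℤ)))
    (hF : ∀ S ∈ F, IsZeroSumSeq (Set.range cl) S) :
    φ ((F.map (liftA φ sec)).sum) = Multiset.toFinsupp (F.sum.map sec) := by
  induction F using Multiset.induction_on with
  | empty => simp
  | cons S F ih =>
    have hS : IsZeroSumSeq (Set.range cl) S := hF S (Multiset.mem_cons_self S F)
    rw [Multiset.map_cons, Multiset.sum_cons, map_add,
      phi_liftA φ cl sec hsec hker hdiv hS, ih (fun T hT => hF T (Multiset.mem_cons_of_mem hT)),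
      Multiset.sum_cons, Multiset.map_add, map_add]

variable (hred : ∀ a b : H, a + b = 0 → a = 0)
include hsec hker hdiv hred in
theorem hasLen_lift (F : Multiset (Multiset (Fin r → ℤ)))
    (hF : ∀ S ∈ F, IsAtomSeq (Set.range cl) S) :
    HasLen ((F.map (liftA φ sec)).sum) (Multiset.card F) := by
  refine ⟨F.map (liftA φ sec), ?_, rfl, by simp⟩
  intro u hu
  obtain ⟨S, hS, rfl⟩ := Multiset.mem_map.mp hu
  rw [atomM_iff_atomSeq φ cl hker hdiv hred,
    block_liftA φ cl sec hsec hker hdiv (hF S hS).1]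
  exact hF S hS

include hsec hker hdiv hred in
/-- main construction: two factorizations with equal total give one element with two lengths -/
theorem two_lengths (F₁ F₂ : Multiset (Multiset (Fin r → ℤ)))
    (h₁ : ∀ S ∈ F₁, IsAtomSeq (Set.range cl) S) (h₂ : ∀ S ∈ F₂, IsAtomSeq (Set.range cl) S)
    (hsum : F₁.sum = F₂.sum) :
    ∃ a : H, HasLen a (Multiset.card F₁) ∧ HasLen a (Multiset.card F₂) := by
  refine ⟨(F₁.map (liftA φ sec)).sum, hasLen_lift φ cl sec hsec hker hdiv hred F₁ h₁, ?_⟩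
  have heq : (F₁.map (liftA φ sec)).sum = (F₂.map (liftA φ sec)).sum := by
    apply phi_inj φ hred hdiv
    rw [phi_sum_lift φ cl sec hsec hker hdiv F₁ (fun S hS => (h₁ S hS).1),
      phi_sum_lift φ cl sec hsec hker hdiv F₂ (fun S hS => (h₂ S hS).1), hsum]
  rw [heq]
  exact hasLen_lift φ cl sec hsec hker hdiv hred F₂ h₂

end Lift

section Count
variable (hker : ∀ x y : P →₀ ℕ, (∃ a b : H, x + φ a = y + φ b) ↔
      (x.sum fun p n => (n : ℤ) • cl p) = (y.sum fun p n => (n : ℤ) • cl p))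
    (hdiv : ∀ a b : H, φ a ≤ φ b → ∃ c : H, b = a + c)
    (hred : ∀ a b : H, a + b = 0 → a = 0)

include hker hdiv hred in
theorem lemB1 [DecidableEq (Fin r → ℤ)] (f : Multiset H) (hf : ∀ u ∈ f, IsAtomM u) :
    2 * Multiset.card f ≤
      Multiset.card (blockOf φ cl f.sum) + Multiset.count 0 (blockOf φ cl f.sum) := by
  induction f using Multiset.induction_on with
  | empty => simp
  | cons u f ih =>
    have hu : IsAtomM u := hf u (Multiset.mem_cons_self u f)
    have hf' := ih (fun v hv => hf v (Multiset.mem_cons_of_mem hv))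
    have hat : IsAtomSeq (Set.range cl) (blockOf φ cl u) :=
      (atomM_iff_atomSeq φ cl hker hdiv hred u).mp hu
    have hu2 : 2 ≤ Multiset.card (blockOf φ cl u) + Multiset.count 0 (blockOf φ cl u) := by
      rcases Nat.lt_or_ge (Multiset.card (blockOf φ cl u)) 2 with h | h
      · have h1 : 1 ≤ Multiset.card (blockOf φ cl u) := by
          rw [Nat.one_le_iff_ne_zero]
          simpa using hat.2.1
        have hcard1 : Multiset.card (blockOf φ cl u) = 1 := by omega
        obtain ⟨a, ha⟩ := Multiset.card_eq_one.mp hcard1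
        have ha0 : a = 0 := by
          have := block_sum_zero φ cl hker u
          rw [ha] at this; simpa using this
        rw [ha, ha0]; simp
      · omega
    rw [Multiset.sum_cons, map_add, Multiset.card_add, Multiset.count_add, Multiset.card_cons]
    omega

include hker hdiv hred in
theorem lemB2 [DecidableEq (Fin r → ℤ)] (D : ℕ) (hD2 : 2 ≤ D)
    (hDle : ∀ S : Multiset (Fin r → ℤ), IsAtomSeq (Set.range cl) S → Multiset.card S ≤ D)
    (f : Multiset H) (hf : ∀ u ∈ f, IsAtomM u) :
    Multiset.card (blockOf φ cl f.sum) + Multiset.count 0 (blockOf φ cl f.sum) ≤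
      Multiset.card f * D := by
  induction f using Multiset.induction_on with
  | empty => simp
  | cons u f ih =>
    have hu : IsAtomM u := hf u (Multiset.mem_cons_self u f)
    have hf' := ih (fun v hv => hf v (Multiset.mem_cons_of_mem hv))
    have hat : IsAtomSeq (Set.range cl) (blockOf φ cl u) :=
      (atomM_iff_atomSeq φ cl hker hdiv hred u).mp hu
    have hu2 : Multiset.card (blockOf φ cl u) + Multiset.count 0 (blockOf φ cl u) ≤ D := by
      by_cases h0 : (0 : Fin r → ℤ) ∈ blockOf φ cl u
      · have := zero_notin_atomseq hat h0
        rw [this]; simpa using hD2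
      · rw [Multiset.count_eq_zero.mpr h0, add_zero]
        exact hDle _ hat
    rw [Multiset.sum_cons, map_add, Multiset.card_add, Multiset.count_add, Multiset.card_cons]
    have := hDle _ hat
    calc Multiset.card (blockOf φ cl u) + Multiset.card (blockOf φ cl f.sum) +
        (Multiset.count 0 (blockOf φ cl u) + Multiset.count 0 (blockOf φ cl f.sum))
        ≤ D + Multiset.card f * D := by omega
      _ = (Multiset.card f + 1) * D := by ring

end Count

theorem enat_eq_top (x : ℕ∞) (h : ∀ N : ℕ, (N : ℕ∞) ≤ x) : x = ⊤ := by
  by_contra hx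
  obtain ⟨m, hm⟩ := WithTop.ne_top_iff_exists.mp hx
  have h2 := h (m + 1)
  rw [← hm] at h2
  exact absurd (Nat.cast_le.mp h2) (by omega)

end St19


/- Let `H` be a reduced Krull monoid (written additively, given by a divisor theory
`φ : H → ℕ₀^{(P)}`) whose class group is free abelian of rank `r ≥ 2` with basis
`(e_1, …, e_r)`; the class of a prime divisor `p` is `cl p ∈ ℤ^r`, the class-sum map is
surjective onto `ℤ^r` and two divisors lie in the same class iff their class sums agree.
Assume the set `G_P = range cl` of classes containing prime divisors is finite, symmetric,
and contains `G_r⁺`. Then for each `k ≥ 1`: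
`ρ_{2k}(H) = k·D(G_P)` and `k·D(G_P) + 1 ≤ ρ_{2k+1}(H) ≤ k·D(G_P) + D(G_P)/2`
(the last inequality stated as `2·ρ_{2k+1}(H) ≤ 2k·D(G_P) + D(G_P)`). -/
theorem stmt19 (r : ℕ) (hr : 2 ≤ r)
    {H : Type*} [AddCancelCommMonoid H]
    (hred : ∀ a b : H, a + b = 0 → a = 0)
    {P : Type*} (φ : H →+ (P →₀ ℕ))
    (hdiv : ∀ a b : H, φ a ≤ φ b → ∃ c : H, b = a + c)
    (hth : ∀ x : P →₀ ℕ, ∃ (T : Finset H) (hT : T.Nonempty),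
      ∀ p : P, T.inf' hT (fun a => φ a p) = x p)
    (cl : P → (Fin r → ℤ))
    (hker : ∀ x y : P →₀ ℕ, (∃ a b : H, x + φ a = y + φ b) ↔
      (x.sum fun p n => (n : ℤ) • cl p) = (y.sum fun p n => (n : ℤ) • cl p))
    (hsurj : ∀ g : Fin r → ℤ, ∃ x y : P →₀ ℕ,
      (x.sum fun p n => (n : ℤ) • cl p) - (y.sum fun p n => (n : ℤ) • cl p) = g)
    (hfin : (Set.range cl).Finite)
    (hsymm : ∀ g ∈ Set.range cl, -g ∈ Set.range cl)
    (hcube : hypercubePlus r ⊆ Set.range cl) :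
    ∀ k : ℕ, 1 ≤ k →
      rhoInv H (2 * k) = (k : ℕ∞) * Davenport (Set.range cl) ∧
      (k : ℕ∞) * Davenport (Set.range cl) + 1 ≤ rhoInv H (2 * k + 1) ∧
      2 * rhoInv H (2 * k + 1) ≤
        ((2 * k : ℕ) : ℕ∞) * Davenport (Set.range cl) + Davenport (Set.range cl) := by
  classical
  intro k hk
  -- basic elements
  set e1 : Fin r → ℤ := fun i => if (i : ℕ) = 0 then 1 else 0 with he1def
  have he1cube : e1 ∈ hypercubePlus r := by
    constructor
    · intro h
      have := congrFun h ⟨0, by omega⟩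
      simp [he1def] at this
    · intro i
      by_cases h : (i : ℕ) = 0 <;> simp [he1def, h]
  have he1 : e1 ∈ Set.range cl := hcube he1cube
  have hne1 : -e1 ∈ Set.range cl := hsymm e1 he1
  have he10 : e1 ≠ 0 := he1cube.1
  have hW : IsAtomSeq (Set.range cl) ({e1, -e1} : Multiset (Fin r → ℤ)) :=
    St19.atomseq_pair he1 hne1 he10
  have hcardW : Multiset.card ({e1, -e1} : Multiset (Fin r → ℤ)) = 2 := rfl
  have h0W : (0 : Fin r → ℤ) ∉ ({e1, -e1} : Multiset (Fin r → ℤ)) := by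
    intro h
    rcases Multiset.mem_cons.mp h with h1 | h1
    · exact he10 h1.symm
    · rw [Multiset.mem_singleton] at h1
      apply he10
      simpa using congrArg Neg.neg h1.symm
  obtain ⟨p0, _⟩ := he1
  haveI : Nonempty P := ⟨p0⟩
  obtain ⟨sec, hsec⟩ : ∃ sec : (Fin r → ℤ) → P, ∀ g ∈ Set.range cl, cl (sec g) = g := by
    refine ⟨fun g => if h : g ∈ Set.range cl then h.choose else Classical.arbitrary P, ?_⟩
    intro g hg
    dsimp only
    rw [dif_pos hg]
    exact hg.choose_spec
  -- Davenport facts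
  have hDle : ∀ S, IsAtomSeq (Set.range cl) S →
      (Multiset.card S : ℕ∞) ≤ Davenport (Set.range cl) := by
    intro S hS
    exact le_iSup₂ (f := fun U (_ : U ∈ {U | IsAtomSeq (Set.range cl) U}) =>
      (Multiset.card U : ℕ∞)) S hS
  have hD2 : (2 : ℕ∞) ≤ Davenport (Set.range cl) := by
    have := hDle _ hW
    rwa [hcardW] at this
  have hmem_rho : ∀ (K N : ℕ) (a : H), HasLen a K → HasLen a N → (N : ℕ∞) ≤ rhoInv H K := by
    intro K N a h1 h2
    exact le_iSup₂ (f := fun n (_ : n ∈ {n : ℕ | ∃ a : H, HasLen a K ∧ HasLen a n}) =>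
      (n : ℕ∞)) N ⟨a, h1, h2⟩
  -- the construction giving lower bounds
  have hcon : ∀ U, IsAtomSeq (Set.range cl) U → (0 : Fin r → ℤ) ∉ U →
      ∃ a b : H, (HasLen a (2 * k) ∧ HasLen a (k * Multiset.card U)) ∧
        (HasLen b (2 * k + 1) ∧ HasLen b (k * Multiset.card U + 1)) := by
    intro U hU h0U
    have hnegU := St19.atomseq_neg hsymm hU
    set F₁ : Multiset (Multiset (Fin r → ℤ)) :=
      Multiset.replicate k U + Multiset.replicate k (U.map fun g => -g) with hF₁
    set F₂ : Multiset (Multiset (Fin r → ℤ)) :=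
      (k • U).map (fun g => ({g, -g} : Multiset (Fin r → ℤ))) with hF₂
    have hmem₁ : ∀ S ∈ F₁, IsAtomSeq (Set.range cl) S := by
      intro S hS
      rcases Multiset.mem_add.mp hS with h | h
      · rw [Multiset.eq_of_mem_replicate h]; exact hU
      · rw [Multiset.eq_of_mem_replicate h]; exact hnegU
    have hmem₂ : ∀ S ∈ F₂, IsAtomSeq (Set.range cl) S := by
      intro S hS
      obtain ⟨g, hg, rfl⟩ := Multiset.mem_map.mp hS
      have hgU : g ∈ U := Multiset.mem_of_mem_nsmul hg
      exact St19.atomseq_pair (hU.1.1 g hgU) (hsymm g (hU.1.1 g hgU))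
        (fun h => h0U (h ▸ hgU))
    have hsum : F₁.sum = F₂.sum := by
      rw [hF₁, hF₂, Multiset.sum_add, Multiset.sum_replicate, Multiset.sum_replicate,
        St19.pairs_sum, Multiset.map_nsmul]
    have hcard₁ : Multiset.card F₁ = 2 * k := by simp [hF₁, two_mul]
    have hcard₂ : Multiset.card F₂ = k * Multiset.card U := by simp [hF₂]
    clear_value F₁ F₂
    obtain ⟨a, ha1, ha2⟩ := St19.two_lengths φ cl sec hsec hker hdiv hred F₁ F₂ hmem₁ hmem₂ hsum
    have hmem₁' : ∀ S ∈ F₁ + {({e1, -e1} : Multiset (Fin r → ℤ))},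
        IsAtomSeq (Set.range cl) S := by
      intro S hS
      rcases Multiset.mem_add.mp hS with h | h
      · exact hmem₁ S h
      · rw [Multiset.mem_singleton.mp h]; exact hW
    have hmem₂' : ∀ S ∈ F₂ + {({e1, -e1} : Multiset (Fin r → ℤ))},
        IsAtomSeq (Set.range cl) S := by
      intro S hS
      rcases Multiset.mem_add.mp hS with h | h
      · exact hmem₂ S h
      · rw [Multiset.mem_singleton.mp h]; exact hW
    obtain ⟨b, hb1, hb2⟩ := St19.two_lengths φ cl sec hsec hker hdiv hred
      (F₁ + {({e1, -e1} : Multiset (Fin r → ℤ))}) (F₂ + {({e1, -e1} : Multiset (Fin r → ℤ))})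
      hmem₁' hmem₂' (by rw [Multiset.sum_add, Multiset.sum_add, hsum])
    rw [hcard₁] at ha1
    rw [hcard₂] at ha2
    rw [Multiset.card_add, hcard₁, Multiset.card_singleton] at hb1
    rw [Multiset.card_add, hcard₂, Multiset.card_singleton] at hb2
    exact ⟨a, b, ⟨ha1, ha2⟩, hb1, hb2⟩
  -- per-atom lower bounds
  have hper : ∀ U, IsAtomSeq (Set.range cl) U →
      ((k * Multiset.card U : ℕ) : ℕ∞) ≤ rhoInv H (2 * k) ∧
      ((k * Multiset.card U + 1 : ℕ) : ℕ∞) ≤ rhoInv H (2 * k + 1) := by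
    intro U hU
    by_cases h0 : (0 : Fin r → ℤ) ∈ U
    · have hU1 : Multiset.card U = 1 := by rw [St19.zero_notin_atomseq hU h0]; rfl
      obtain ⟨a, b, ⟨ha1, ha2⟩, hb1, hb2⟩ := hcon _ hW h0W
      rw [hcardW] at ha2 hb2
      constructor
      · refine le_trans ?_ (hmem_rho _ _ a ha1 ha2)
        rw [hU1]
        exact_mod_cast Nat.mul_le_mul (le_refl k) (by omega)
      · refine le_trans ?_ (hmem_rho _ _ b hb1 hb2)
        rw [hU1]
        have : k * 1 + 1 ≤ k * 2 + 1 := by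
          have := Nat.mul_le_mul (le_refl k) (show 1 ≤ 2 by omega)
          omega
        exact_mod_cast this
    · obtain ⟨a, b, ⟨ha1, ha2⟩, hb1, hb2⟩ := hcon U hU h0
      exact ⟨hmem_rho _ _ a ha1 ha2, hmem_rho _ _ b hb1 hb2⟩
  -- upper bound machinery
  have hup : ∀ (Dn : ℕ), 2 ≤ Dn →
      (∀ S, IsAtomSeq (Set.range cl) S → Multiset.card S ≤ Dn) →
      ∀ (K N : ℕ) (a : H), HasLen a K → HasLen a N → 2 * N ≤ K * Dn := by
    intro Dn h2 hle K N a hK hN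
    obtain ⟨f, hf, hfs, hfc⟩ := hN
    obtain ⟨g, hg, hgs, hgc⟩ := hK
    have h1 := St19.lemB1 φ cl hker hdiv hred f hf
    have h2' := St19.lemB2 φ cl hker hdiv hred Dn h2 hle g hg
    rw [hfs, hfc] at h1
    rw [hgs, hgc] at h2'
    exact h1.trans h2'
  rcases eq_or_ne (Davenport (Set.range cl)) ⊤ with hDtop | hDfin
  · -- infinite Davenport constant
    have hbig : ∀ N : ℕ, ∃ U, IsAtomSeq (Set.range cl) U ∧ N < Multiset.card U := by
      intro N
      have hlt : (N : ℕ∞) < Davenport (Set.range cl) := by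
        rw [hDtop]
        exact Ne.lt_top (by simp)
      rw [Davenport, lt_iSup_iff] at hlt
      obtain ⟨U, hU⟩ := hlt
      rw [lt_iSup_iff] at hU
      obtain ⟨hUm, hlt⟩ := hU
      exact ⟨U, hUm, by exact_mod_cast hlt⟩
    have h2k_top : rhoInv H (2 * k) = ⊤ := by
      apply St19.enat_eq_top
      intro N
      obtain ⟨U, hU, hN⟩ := hbig N
      refine le_trans ?_ (hper U hU).1
      have : N ≤ k * Multiset.card U := by
        calc N ≤ Multiset.card U := hN.le
          _ ≤ k * Multiset.card U := Nat.le_mul_of_pos_left _ (by omega)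
      exact_mod_cast this
    have h2k1_top : rhoInv H (2 * k + 1) = ⊤ := by
      apply St19.enat_eq_top
      intro N
      obtain ⟨U, hU, hN⟩ := hbig N
      refine le_trans ?_ (hper U hU).2
      have : N ≤ k * Multiset.card U + 1 := by
        have : N ≤ k * Multiset.card U := by
          calc N ≤ Multiset.card U := hN.le
            _ ≤ k * Multiset.card U := Nat.le_mul_of_pos_left _ (by omega)
        omega
      exact_mod_cast this
    refine ⟨?_, ?_, ?_⟩
    · rw [h2k_top, hDtop, ENat.mul_top (by exact_mod_cast (by omega : k ≠ 0))]
    · rw [h2k1_top]; exact le_top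
    · rw [hDtop, ENat.mul_top (by exact_mod_cast (by omega : 2 * k ≠ 0))]
      simp
  · -- finite Davenport constant
    obtain ⟨d, hd⟩ : ∃ d : ℕ, (d : ℕ∞) = Davenport (Set.range cl) := CanLift.prf _ hDfin
    have hd2 : 2 ≤ d := by
      rw [← hd] at hD2
      exact_mod_cast hD2
    have hdleNat : ∀ S, IsAtomSeq (Set.range cl) S → Multiset.card S ≤ d := by
      intro S hS
      have := hDle S hS
      rw [← hd] at this
      exact_mod_cast this
    have hex : ∃ U, IsAtomSeq (Set.range cl) U ∧ Multiset.card U = d := by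
      have hlt : ((d - 1 : ℕ) : ℕ∞) < Davenport (Set.range cl) := by
        rw [← hd]
        exact_mod_cast (by omega : d - 1 < d)
      rw [Davenport, lt_iSup_iff] at hlt
      obtain ⟨U, hU⟩ := hlt
      rw [lt_iSup_iff] at hU
      obtain ⟨hUm, hlt⟩ := hU
      have h1 : d - 1 < Multiset.card U := by exact_mod_cast hlt
      exact ⟨U, hUm, le_antisymm (hdleNat U hUm) (by omega)⟩
    obtain ⟨U, hU, hUd⟩ := hex
    have hperU := hper U hU
    rw [hUd] at hperU
    refine ⟨le_antisymm ?_ ?_, ?_, ?_⟩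
    · -- rhoInv (2k) ≤ k*D
      rw [← hd, rhoInv]
      apply iSup₂_le
      rintro n ⟨a, hK, hN⟩
      have h2n := hup d hd2 hdleNat (2 * k) n a hK hN
      rw [show 2 * k * d = 2 * (k * d) by ring] at h2n
      have hn : n ≤ k * d := by omega
      exact_mod_cast hn
    · rw [← hd]
      calc (k : ℕ∞) * (d : ℕ∞) = ((k * d : ℕ) : ℕ∞) := by push_cast; ring
        _ ≤ _ := hperU.1
    · rw [← hd]
      calc (k : ℕ∞) * (d : ℕ∞) + 1 = ((k * d + 1 : ℕ) : ℕ∞) := by push_cast; ring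
        _ ≤ _ := hperU.2
    · have hrle : rhoInv H (2 * k + 1) ≤ ((k * d + d / 2 : ℕ) : ℕ∞) := by
        rw [rhoInv]
        apply iSup₂_le
        rintro n ⟨a, hK, hN⟩
        have h2n := hup d hd2 hdleNat (2 * k + 1) n a hK hN
        rw [show (2 * k + 1) * d = 2 * (k * d) + d by ring] at h2n
        exact_mod_cast (by omega : n ≤ k * d + d / 2)
      calc 2 * rhoInv H (2 * k + 1) ≤ 2 * ((k * d + d / 2 : ℕ) : ℕ∞) :=
            mul_le_mul_right hrle 2
        _ = ((2 * (k * d + d / 2) : ℕ) : ℕ∞) := by push_cast; ring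
        _ ≤ ((2 * (k * d) + d : ℕ) : ℕ∞) := by
            have hh : 2 * (k * d + d / 2) ≤ 2 * (k * d) + d := by omega
            exact_mod_cast hh
        _ = ((2 * k : ℕ) : ℕ∞) * Davenport (Set.range cl) + Davenport (Set.range cl) := by
            rw [← hd]; push_cast; ring
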